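/- Let A be an associative unital normed ℝ-algebra and ε ∈ A with ε² = 0. Let q : ℝ → A be twice differentiable with q(t) and q̇(t) central in A for all t, and let ψ : ℝ → A be differentiable with ψ(s)ψ(t) + ψ(t)ψ(s) = 0 and εψ(t) + ψ(t)ε = 0, and moreover εψ̇(t) + ψ̇(t)ε = 0, for all s, t ∈ ℝ. Define the Lagrangian L(q,ψ)(t) = (1/4)q̇(t)² − ψ̇(t)ψ(t) and the transformed fields q' = q + εψ, ψ' = ψ − (1/4)εq̇. Then the Lagrangian is quasi-invariant: L(q',ψ')(t) − L(q,ψ)(t) = (1/4)ε (q̈(t)ψ(t) + q̇(t)ψ̇(t)) = (1/4)ε d/dt(q̇ψ)(t) for all t. -/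

import Mathlib

lemma susy_key {A : Type*} [Ring A] [Module ℝ A]
    [SMulCommClass ℝ A A] [IsScalarTower ℝ A A]
    (ε a b p d : A) (hε : ε * ε = 0)
    (ha : ∀ x, a * x = x * a) (hb : ∀ x, b * x = x * b)
    (hεd : ε * d + d * ε = 0) :
    (1/4 : ℝ) • ((a + ε * d) * (a + ε * d))
      - (d - (1/4 : ℝ) • (ε * b)) * (p - (1/4 : ℝ) • (ε * a))
      - ((1/4 : ℝ) • (a * a) - d * p)
      = (1/4 : ℝ) • (ε * (b * p + a * d)) := by
  have hdε : d * ε = -(ε * d) := eq_neg_of_add_eq_zero_right hεd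
  have h1 : (a + ε * d) * (a + ε * d) = a * a + ε * (a * d) + ε * (a * d) := by
    have e1 : a * (ε * d) = ε * (a * d) := by
      rw [ha (ε * d), mul_assoc, ← ha d]
    have e2 : ε * d * (ε * d) = 0 := by
      rw [mul_assoc, ← mul_assoc d ε d, hdε, neg_mul, mul_neg, ← mul_assoc,
        ← mul_assoc, hε, zero_mul, zero_mul, neg_zero]
    have e3 : ε * d * a = ε * (a * d) := by rw [mul_assoc, ← ha d]
    rw [add_mul, mul_add, mul_add, e1, e2, e3, add_zero]
  have h2 : (d - (1/4 : ℝ) • (ε * b)) * (p - (1/4 : ℝ) • (ε * a))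
      = d * p + (1/4 : ℝ) • (ε * (a * d)) - (1/4 : ℝ) • (ε * (b * p)) := by
    have e4 : d * ((1/4 : ℝ) • (ε * a)) = -((1/4 : ℝ) • (ε * (a * d))) := by
      rw [mul_smul_comm, ← mul_assoc, hdε, neg_mul, ← smul_neg]
      congr 2
      rw [mul_assoc, ← ha d]
    have e0 : (ε * b) * (ε * a) = 0 := by
      rw [mul_assoc ε b (ε * a), hb (ε * a), ← mul_assoc, ← mul_assoc, hε,
        zero_mul, zero_mul]
    have e5 : ((1/4 : ℝ) • (ε * b)) * ((1/4 : ℝ) • (ε * a)) = 0 := by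
      rw [smul_mul_assoc, mul_smul_comm, e0, smul_zero, smul_zero]
    rw [sub_mul, mul_sub, mul_sub, e4, e5, sub_zero, smul_mul_assoc, mul_assoc]
    abel
  rw [h1, h2]
  rw [mul_add, smul_add, smul_add, smul_add]
  abel

/-- Quasi-invariance of the N=1 supersymmetric mechanics Lagrangian
L = (1/4)q̇² − ψ̇ψ under the supersymmetry transformation
q ↦ q + εψ, ψ ↦ ψ − (1/4)εq̇: the Lagrangian changes by the total
derivative (1/4)ε d/dt(q̇ψ). -/
theorem susy_lagrangian_quasi_invariant
    {A : Type*} [NormedRing A] [NormedAlgebra ℝ A]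
    (ε : A) (hε : ε * ε = 0)
    (q : ℝ → A)
    (hq : Differentiable ℝ q) (hq' : Differentiable ℝ (deriv q))
    (hqc : ∀ t (x : A), q t * x = x * q t)
    (hq'c : ∀ t (x : A), deriv q t * x = x * deriv q t)
    (ψ : ℝ → A) (hψd : Differentiable ℝ ψ)
    (hψψ : ∀ s t, ψ s * ψ t + ψ t * ψ s = 0)
    (hεψ : ∀ t, ε * ψ t + ψ t * ε = 0)
    (hεψ' : ∀ t, ε * deriv ψ t + deriv ψ t * ε = 0)
    (L : (ℝ → A) → (ℝ → A) → ℝ → A)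
    (hL : ∀ (Q Ψ : ℝ → A) (t : ℝ),
      L Q Ψ t = (1/4 : ℝ) • (deriv Q t * deriv Q t) - deriv Ψ t * Ψ t)
    (q' ψ' : ℝ → A)
    (hq'def : q' = fun t => q t + ε * ψ t)
    (hψ'def : ψ' = fun t => ψ t - (1/4 : ℝ) • (ε * deriv q t)) :
    ∀ t : ℝ,
      L q' ψ' t - L q ψ t
        = (1/4 : ℝ) • (ε * (deriv (deriv q) t * ψ t + deriv q t * deriv ψ t)) ∧
      L q' ψ' t - L q ψ t
        = (1/4 : ℝ) • (ε * deriv (fun s => deriv q s * ψ s) t) := by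
  have hdq' : ∀ t, deriv q' t = deriv q t + ε * deriv ψ t := by
    intro t
    rw [hq'def, deriv_fun_add (hq t) ((hψd t).const_mul ε), deriv_const_mul ε (hψd t)]
  have hdψ' : ∀ t, deriv ψ' t = deriv ψ t - (1/4 : ℝ) • (ε * deriv (deriv q) t) := by
    intro t
    rw [hψ'def, deriv_fun_sub (hψd t) (show DifferentiableAt ℝ (fun y => (1/4 : ℝ) • (ε * deriv q y)) t from
        ((hq' t).const_mul ε).const_smul (1/4 : ℝ)),
      deriv_fun_const_smul _ ((hq' t).const_mul ε), deriv_const_mul ε (hq' t)]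
  have hq''c : ∀ t (x : A), deriv (deriv q) t * x = x * deriv (deriv q) t := by
    intro t x
    have h1 : deriv (fun s => deriv q s * x) t = deriv (deriv q) t * x :=
      deriv_mul_const (hq' t) x
    have h2 : deriv (fun s => x * deriv q s) t = x * deriv (deriv q) t :=
      deriv_const_mul x (hq' t)
    rw [← h1, ← h2]
    congr 1
    exact funext fun s => hq'c s x
  intro t
  have hderiv : deriv (fun s => deriv q s * ψ s) t
      = deriv (deriv q) t * ψ t + deriv q t * deriv ψ t :=
    deriv_mul (hq' t) (hψd t)
  constructor
  · rw [hL, hL, hdq' t, hdψ' t, hψ'def]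
    exact susy_key ε (deriv q t) (deriv (deriv q) t) (ψ t) (deriv ψ t) hε
      (hq'c t) (hq''c t) (hεψ' t)
  · rw [hderiv, hL, hL, hdq' t, hdψ' t, hψ'def]
    exact susy_key ε (deriv q t) (deriv (deriv q) t) (ψ t) (deriv ψ t) hε
      (hq'c t) (hq''c t) (hεψ' t)
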